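/- Let H and K be complex inner product spaces with dim(H) ≥ 2, and let A : H → K be a non-zero additive mapping preserving Euclidean orthogonality. Then the following statements are equivalent: (a) A is complex-linear or conjugate-linear; (b) for every z ∈ H, A(i z) ∈ {i A(z), -i A(z)}; (c) there exists a non-zero z ∈ H with A(i z) ∈ {i A(z), -i A(z)}; (d) there exists a non-zero z ∈ H such that i A(z) ∈ A(H). -/

import Mathlib

open scoped ComplexInnerProductSpace
open Complex

set_option linter.unusedSectionVars false
set_option linter.unusedVariables false
set_option maxHeartbeats 1600000

namespace CharacterizationAux

lemma addhom_rat (g : ℝ →+ ℝ) (q : ℚ) : g q = g 1 * q := by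
  have := map_ratCast_smul g ℝ ℝ q 1
  simpa [Rat.smul_def, mul_comm] using this

lemma addhom_bounded_linear (g : ℝ →+ ℝ) (C : ℝ) (hb : ∀ t, |g t| ≤ C * |t|) (t : ℝ) :
    g t = g 1 * t := by
  by_contra hne
  set d := |g t - g 1 * t| with hd
  have hdpos : 0 < d := abs_pos.mpr (sub_ne_zero.mpr hne)
  have hC : 0 ≤ C := by
    have h1 := hb 1
    have h2 := (abs_nonneg (g 1)).trans h1
    simpa using h2
  set M := C + |g 1| + 1 with hM
  have hMpos : 0 < M := by positivity
  have hδ : 0 < d / (2 * M) := by positivity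
  obtain ⟨q, hq1, hq2⟩ := exists_rat_btwn (show t - d / (2 * M) < t + d / (2 * M) by linarith)
  have h1 : g t - g 1 * t = g (t - q) + (g 1 * q - g 1 * t) := by
    have h : g t = g (t - q) + g q := by rw [← map_add]; ring_nf
    rw [h, addhom_rat g q]; ring
  have habs : |(t : ℝ) - q| ≤ d / (2 * M) := by
    rw [abs_sub_le_iff]; constructor <;> linarith
  have h2 : d ≤ (C + |g 1|) * (d / (2 * M)) := by
    conv_lhs => rw [hd, h1]
    calc |g (t - q) + (g 1 * q - g 1 * t)| ≤ |g (t - q)| + |g 1 * q - g 1 * t| := abs_add_le _ _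
      _ ≤ C * |t - q| + |g 1| * |t - q| := by
          have e1 := hb (t - q)
          have e2 : |g 1 * q - g 1 * t| = |g 1| * |t - q| := by
            rw [← abs_mul]; ring_nf; rw [abs_sub_comm]; ring_nf
          rw [e2]; linarith
      _ ≤ C * (d / (2 * M)) + |g 1| * (d / (2 * M)) := by
          have := abs_nonneg (g 1)
          have h2M : 0 < d / (2*M) := hδ
          nlinarith [abs_nonneg (t - (q:ℝ))]
      _ = (C + |g 1|) * (d / (2 * M)) := by ring
  have h3 : (C + |g 1|) * (d / (2 * M)) < d := by
    have hlt : C + |g 1| < 2 * M := by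
      rw [hM]; have := abs_nonneg (g 1); linarith
    rw [div_eq_mul_inv]
    have h2M : (0:ℝ) < 2 * M := by linarith
    calc (C + |g 1|) * (d * (2 * M)⁻¹) < (2 * M) * (d * (2 * M)⁻¹) := by
          apply mul_lt_mul_of_pos_right hlt; positivity
      _ = d := by field_simp
  linarith

lemma addhom_nonneg_linear (g : ℝ →+ ℝ) (hp : ∀ t, 0 ≤ t → 0 ≤ g t) (t : ℝ) :
    g t = g 1 * t := by
  have mono : ∀ a b : ℝ, a ≤ b → g a ≤ g b := by
    intro a b hab
    have h1 := hp (b - a) (by linarith)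
    have h2 : g b = g a + g (b - a) := by rw [← map_add]; ring_nf
    linarith
  by_contra hne
  set d := |g t - g 1 * t| with hd
  have hdpos : 0 < d := abs_pos.mpr (sub_ne_zero.mpr hne)
  have hg1 : 0 ≤ g 1 := hp 1 zero_le_one
  set ε := d / (2 * (g 1 + 1)) with hε
  have hεpos : 0 < ε := by positivity
  obtain ⟨q1, hq11, hq12⟩ := exists_rat_btwn (show t - ε < t by linarith)
  obtain ⟨q2, hq21, hq22⟩ := exists_rat_btwn (show t < t + ε by linarith)
  have hb1 : g 1 * q1 ≤ g t := by rw [← addhom_rat g q1]; exact mono _ _ hq12.le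
  have hb2 : g t ≤ g 1 * q2 := by rw [← addhom_rat g q2]; exact mono _ _ hq21.le
  have hb3 : g 1 * q1 ≤ g 1 * t := by apply mul_le_mul_of_nonneg_left hq12.le hg1
  have hb4 : g 1 * t ≤ g 1 * q2 := by apply mul_le_mul_of_nonneg_left hq21.le hg1
  have hdle : d ≤ g 1 * q2 - g 1 * q1 := by
    rw [hd, abs_sub_le_iff]; constructor <;> linarith
  have : g 1 * q2 - g 1 * q1 ≤ g 1 * (2 * ε) := by nlinarith
  have hfin : g 1 * (2 * ε) < d := by
    rw [hε]
    have h2 : g 1 * (2 * (d / (2 * (g 1 + 1)))) = d * (g 1 / (g 1 + 1)) := by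
      field_simp
    rw [h2]
    have : g 1 / (g 1 + 1) < 1 := by
      rw [div_lt_one (by linarith)]; linarith
    nlinarith
  linarith


variable {H K : Type*} [NormedAddCommGroup H] [InnerProductSpace ℂ H]
  [NormedAddCommGroup K] [InnerProductSpace ℂ K]

lemma inner_self_complex (x : K) : ⟪x, x⟫ = ((‖x‖ ^ 2 : ℝ) : ℂ) := by
  rw [inner_self_eq_norm_sq_to_K]; norm_cast

lemma exists_orth (hdim : 2 ≤ Module.rank ℂ H) (x : H) : ∃ y : H, y ≠ 0 ∧ ⟪x, y⟫ = 0 := by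
  have hnt : Nontrivial H := rank_pos_iff_nontrivial.mp (lt_of_lt_of_le (by norm_num) hdim)
  by_cases hx : x = 0
  · obtain ⟨y, hy⟩ := exists_ne (0 : H)
    exact ⟨y, hy, by simp [hx]⟩
  · by_contra hcon
    push_neg at hcon
    have hspan : ∀ v : H, ∃ c : ℂ, c • x = v := by
      intro v
      refine ⟨⟪x, v⟫ / ((‖x‖ : ℂ) ^ 2), ?_⟩
      by_contra hne
      have hy : v - (⟪x, v⟫ / ((‖x‖ : ℂ) ^ 2)) • x ≠ 0 := by
        intro h
        rw [sub_eq_zero] at h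
        exact hne h.symm
      have hnx : (‖x‖ : ℂ) ≠ 0 := by
        simpa using norm_ne_zero_iff.mpr hx
      have hinner : ⟪x, v - (⟪x, v⟫ / ((‖x‖ : ℂ) ^ 2)) • x⟫ = 0 := by
        rw [inner_sub_right, inner_smul_right, inner_self_eq_norm_sq_to_K]
        field_simp; simp
      exact hcon _ hy hinner
    have h1 : Module.rank ℂ H ≤ 1 := rank_le_one_iff.mpr ⟨x, hspan⟩
    have h2 : (2 : Cardinal) ≤ 1 := le_trans hdim h1
    norm_num at h2

lemma exists_orth_pair (hdim : 2 ≤ Module.rank ℂ H) (x : H) (hx : x ≠ 0) :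
    ∃ f : H, ⟪x, f⟫ = 0 ∧ ‖f‖ = ‖x‖ ∧ f ≠ 0 := by
  obtain ⟨y, hy0, hxy⟩ := exists_orth hdim x
  have hny : (‖y‖ : ℝ) ≠ 0 := norm_ne_zero_iff.mpr hy0
  refine ⟨((‖x‖ / ‖y‖ : ℝ) : ℂ) • y, ?_, ?_, ?_⟩
  · rw [inner_smul_right, hxy, mul_zero]
  · have hpx : 0 < ‖x‖ := norm_pos_iff.mpr hx
    rw [norm_smul]
    simp only [Complex.norm_real, Real.norm_eq_abs]
    rw [_root_.abs_of_nonneg (by positivity)]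
    field_simp
  · have hpx : 0 < ‖x‖ := norm_pos_iff.mpr hx
    apply smul_ne_zero _ hy0
    simp only [ne_eq, Complex.ofReal_eq_zero]
    positivity

lemma decomp (hdim : 2 ≤ Module.rank ℂ H) (u v : H) (hu : u ≠ 0) :
    ∃ (f : H) (c d : ℂ), ⟪u, f⟫ = 0 ∧ ‖f‖ = ‖u‖ ∧ f ≠ 0 ∧ v = c • u + d • f := by
  have hnu : (‖u‖ : ℝ) ≠ 0 := norm_ne_zero_iff.mpr hu
  set c : ℂ := ⟪u, v⟫ / ((‖u‖ : ℂ) ^ 2) with hc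
  set y := v - c • u with hy
  have hcx : (‖u‖ : ℂ) ≠ 0 := by simpa using hnu
  have huy : ⟪u, y⟫ = 0 := by
    rw [hy, inner_sub_right, inner_smul_right, inner_self_eq_norm_sq_to_K, hc]
    field_simp; simp
  by_cases h0 : y = 0
  · obtain ⟨f, hf1, hf2, hf3⟩ := exists_orth_pair hdim u hu
    refine ⟨f, c, 0, hf1, hf2, hf3, ?_⟩
    have : v = c • u := by rw [← sub_eq_zero]; rw [hy] at h0; exact h0
    rw [this, zero_smul, add_zero]
  · have hny : (‖y‖ : ℝ) ≠ 0 := norm_ne_zero_iff.mpr h0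
    refine ⟨((‖u‖ / ‖y‖ : ℝ) : ℂ) • y, c, ((‖y‖ / ‖u‖ : ℝ) : ℂ), ?_, ?_, ?_, ?_⟩
    · rw [inner_smul_right, huy, mul_zero]
    · have hpu : 0 < ‖u‖ := norm_pos_iff.mpr hu
      rw [norm_smul]
      simp only [Complex.norm_real, Real.norm_eq_abs]
      rw [_root_.abs_of_nonneg (by positivity)]
      field_simp
    · have hpu : 0 < ‖u‖ := norm_pos_iff.mpr hu
      apply smul_ne_zero _ h0
      simp only [ne_eq, Complex.ofReal_eq_zero]
      positivity
    · rw [smul_smul]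
      have : ((‖y‖ / ‖u‖ : ℝ) : ℂ) * ((‖u‖ / ‖y‖ : ℝ) : ℂ) = 1 := by
        rw [← Complex.ofReal_mul]
        field_simp; simp
      rw [this, one_smul, hy]
      abel


lemma Aneg (A : H → K) (hadd : ∀ x y, A (x + y) = A x + A y) (x : H) : A (-x) = -A x := by
  have h0 : A 0 = 0 := by
    have h := hadd 0 0
    simp only [add_zero] at h
    exact (left_eq_add.mp h)
  have h := hadd x (-x)
  simp only [add_neg_cancel, h0] at h
  exact eq_neg_of_add_eq_zero_right h.symm

lemma keyid (A : H → K) (hadd : ∀ x y, A (x + y) = A x + A y)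
    (hop : ∀ x y : H, ⟪x, y⟫ = 0 → ⟪A x, A y⟫ = 0)
    {e f : H} (hef : ⟪e, f⟫ = 0) (hnorm : ‖e‖ = ‖f‖) (ζ μ ν : ℂ) :
    ⟪A (ζ • e), A ((ν * (starRingEnd ℂ) μ) • e)⟫
      = ⟪A (μ • f), A ((ν * (starRingEnd ℂ) ζ) • f)⟫ := by
  have hfe : ⟪f, e⟫ = 0 := inner_eq_zero_symm.mp hef
  have h0 : ⟪ζ • e + μ • f, (ν * (starRingEnd ℂ) μ) • e + (-(ν * (starRingEnd ℂ) ζ)) • f⟫ = 0 := by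
    simp only [inner_add_left, inner_add_right, inner_smul_left, inner_smul_right, hef, hfe,
      inner_self_eq_norm_sq_to_K, hnorm, mul_zero, add_zero, zero_add]
    ring
  have h1 := hop _ _ h0
  rw [hadd, hadd] at h1
  have e3 : A ((-(ν * (starRingEnd ℂ) ζ)) • f) = -A ((ν * (starRingEnd ℂ) ζ) • f) := by
    rw [neg_smul]; exact Aneg A hadd _
  rw [e3] at h1
  have c1 : ⟪A (ζ • e), A ((ν * (starRingEnd ℂ) ζ) • f)⟫ = 0 := by
    apply hop
    rw [inner_smul_left, inner_smul_right, hef]; ring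
  have c2 : ⟪A (μ • f), A ((ν * (starRingEnd ℂ) μ) • e)⟫ = 0 := by
    apply hop
    rw [inner_smul_left, inner_smul_right, hfe]; ring
  simp only [inner_add_left, inner_add_right, inner_neg_right, c1, c2] at h1
  linear_combination h1


theorem phi_formula (A : H → K) (hadd : ∀ x y, A (x + y) = A x + A y)
    (hop : ∀ x y : H, ⟪x, y⟫ = 0 → ⟪A x, A y⟫ = 0)
    {e f : H} (hef : ⟪e, f⟫ = 0) (hnorm : ‖e‖ = ‖f‖) (ζ ν : ℂ) :
    ⟪A (ζ • e), A (ν • e)⟫ =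
      ((‖A e‖ ^ 2 * (ν * (starRingEnd ℂ) ζ).re : ℝ) : ℂ)
        + ((⟪A e, A (Complex.I • e)⟫.im * (ν * (starRingEnd ℂ) ζ).im : ℝ) : ℂ) * Complex.I := by
  have hfe : ⟪f, e⟫ = 0 := inner_eq_zero_symm.mp hef
  set Φ : ℂ →+ ℂ := AddMonoidHom.mk' (fun w => ⟪A e, A (w • e)⟫)
    (fun w w' => by
      show (⟪A e, A ((w + w') • e)⟫) = (⟪A e, A (w • e)⟫) + (⟪A e, A (w' • e)⟫)
      rw [add_smul, hadd, inner_add_right]) with hΦ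
  have hΦdef : ∀ w, Φ w = ⟪A e, A (w • e)⟫ := fun w => rfl
  -- (I) the fundamental identity
  have ha : ∀ ζ ν : ℂ, ⟪A (ζ • e), A (ν • e)⟫ = Φ (ν * (starRingEnd ℂ) ζ) := by
    intro ζ ν
    have k1 := keyid A hadd hop hef hnorm ζ 1 ν
    have k2 := keyid A hadd hop hfe hnorm.symm 1 1 (ν * (starRingEnd ℂ) ζ)
    simp only [map_one, mul_one, one_smul] at k1 k2
    rw [k1, k2, hΦdef]
  -- conjugation property
  have hconj : ∀ w, Φ ((starRingEnd ℂ) w) = (starRingEnd ℂ) (Φ w) := by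
    intro w
    have h1 : (starRingEnd ℂ) (Φ w) = ⟪A (w • e), A e⟫ := by
      rw [hΦdef, inner_conj_symm]
    have h2 := ha w 1
    simp only [one_mul] at h2
    rw [h1, ← h2, one_smul]
  -- real part behaviour
  have hd : ∀ t : ℝ, 0 ≤ t → Φ (t : ℂ) = ((‖A ((Real.sqrt t : ℂ) • e)‖ ^ 2 : ℝ) : ℂ) := by
    intro t ht
    have h := ha (Real.sqrt t : ℂ) (Real.sqrt t : ℂ)
    rw [inner_self_complex] at h
    have hmul : ((Real.sqrt t : ℂ)) * (starRingEnd ℂ) ((Real.sqrt t : ℂ)) = (t : ℂ) := by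
      rw [Complex.conj_ofReal, ← Complex.ofReal_mul, Real.mul_self_sqrt ht]
    rw [hmul] at h
    rw [← h]
  set g1 : ℝ →+ ℝ := AddMonoidHom.mk' (fun t => (Φ (t : ℂ)).re)
    (fun a b => by
      show (Φ ((a + b : ℝ) : ℂ)).re = (Φ (a : ℂ)).re + (Φ (b : ℂ)).re
      rw [Complex.ofReal_add, map_add, Complex.add_re]) with hg1def
  have hg1 : ∀ t : ℝ, g1 t = (Φ (t : ℂ)).re := fun t => rfl
  have hΦ1 : Φ 1 = ((‖A e‖ ^ 2 : ℝ) : ℂ) := by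
    rw [hΦdef, one_smul, inner_self_complex]
  have hg1lin := addhom_nonneg_linear g1 (fun t ht => by
    rw [hg1, hd t ht]
    simp only [Complex.ofReal_re]
    positivity)
  have hg1one : g1 1 = ‖A e‖ ^ 2 := by
    have h1 : ((1 : ℝ) : ℂ) = 1 := by norm_num
    rw [hg1, h1, hΦ1]
    norm_cast
  have himzero : ∀ t : ℝ, (Φ (t : ℂ)).im = 0 := by
    intro t
    rcases le_or_gt 0 t with ht | ht
    · rw [hd t ht]
      norm_cast
    · have hneg : ((t : ℝ) : ℂ) = -(((-t : ℝ)) : ℂ) := by push_cast; ring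
      rw [hneg, map_neg, Complex.neg_im, hd (-t) (by linarith)]
      simp [← Complex.ofReal_pow]
  have hreal : ∀ t : ℝ, Φ (t : ℂ) = ((‖A e‖ ^ 2 * t : ℝ) : ℂ) := by
    intro t
    apply Complex.ext
    · rw [← hg1, hg1lin, hg1one, Complex.ofReal_re]
    · rw [himzero, Complex.ofReal_im]
  -- imaginary axis behaviour
  set s : ℝ := (⟪A e, A (Complex.I • e)⟫).im with hs
  have hΦI : Φ Complex.I = ⟪A e, A (Complex.I • e)⟫ := hΦdef _
  have hnormI : ∀ t : ℝ, (‖A (((t : ℂ) * Complex.I) • e)‖ : ℝ) ^ 2 = ‖A e‖ ^ 2 * t ^ 2 := by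
    intro t
    have h := ha ((t : ℂ) * Complex.I) ((t : ℂ) * Complex.I)
    rw [inner_self_complex] at h
    have hmul : ((t : ℂ) * Complex.I) * (starRingEnd ℂ) ((t : ℂ) * Complex.I) = ((t ^ 2 : ℝ) : ℂ) := by
      rw [Complex.mul_conj]
      norm_cast
      simp [Complex.normSq_mul, Complex.normSq_I, Complex.normSq_ofReal, sq]
    rw [hmul, hreal] at h
    exact_mod_cast h
  have hre0 : ∀ t : ℝ, (Φ ((t : ℂ) * Complex.I)).re = 0 := by
    intro t
    have h1 := hconj ((t : ℂ) * Complex.I)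
    have h2 : (starRingEnd ℂ) ((t : ℂ) * Complex.I) = -((t : ℂ) * Complex.I) := by
      simp [map_mul, Complex.conj_ofReal, Complex.conj_I]
    rw [h2, map_neg] at h1
    have h3 := congrArg Complex.re h1
    simp only [Complex.neg_re, Complex.conj_re] at h3
    linarith
  have hb : ∀ t : ℝ, |(Φ ((t : ℂ) * Complex.I)).im| ≤ ‖A e‖ ^ 2 * |t| := by
    intro t
    have h1 : |(Φ ((t : ℂ) * Complex.I)).im| ≤ ‖Φ ((t : ℂ) * Complex.I)‖ := by
      exact Complex.abs_im_le_norm _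
    have h2 : ‖Φ ((t : ℂ) * Complex.I)‖ ≤ ‖A e‖ * ‖A (((t : ℂ) * Complex.I) • e)‖ := by
      rw [hΦdef]
      exact norm_inner_le_norm _ _
    have h4 : (‖A e‖ * ‖A (((t : ℂ) * Complex.I) • e)‖) ^ 2 = (‖A e‖ ^ 2 * |t|) ^ 2 := by
      rw [mul_pow, hnormI, ← _root_.sq_abs t]
      ring
    have h5 : ‖A e‖ * ‖A (((t : ℂ) * Complex.I) • e)‖ ≤ ‖A e‖ ^ 2 * |t| := by
      have ha0 : 0 ≤ ‖A e‖ * ‖A (((t : ℂ) * Complex.I) • e)‖ := by positivity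
      have hb0 : 0 ≤ ‖A e‖ ^ 2 * |t| := by positivity
      have h6 : Real.sqrt ((‖A e‖ * ‖A (((t : ℂ) * Complex.I) • e)‖) ^ 2)
          = Real.sqrt ((‖A e‖ ^ 2 * |t|) ^ 2) := by rw [h4]
      rw [Real.sqrt_sq ha0, Real.sqrt_sq hb0] at h6
      linarith
    linarith
  set g2 : ℝ →+ ℝ := AddMonoidHom.mk' (fun t => (Φ ((t : ℂ) * Complex.I)).im)
    (fun a b => by
      show (Φ (((a + b : ℝ) : ℂ) * Complex.I)).im = _ + _
      rw [Complex.ofReal_add, add_mul, map_add, Complex.add_im]) with hg2def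
  have hg2 : ∀ t : ℝ, g2 t = (Φ ((t : ℂ) * Complex.I)).im := fun t => rfl
  have hg2lin := addhom_bounded_linear g2 (‖A e‖ ^ 2) (fun t => by rw [hg2]; exact hb t)
  have hg2one : g2 1 = s := by
    rw [hg2]
    norm_num [hΦI, hs]
  have him : ∀ t : ℝ, Φ ((t : ℂ) * Complex.I) = ((s * t : ℝ) : ℂ) * Complex.I := by
    intro t
    apply Complex.ext
    · rw [hre0]
      simp
    · have := hg2 t
      rw [hg2lin, hg2one] at this
      simp [← this]
  -- assemble
  have hw : ∀ w : ℂ, Φ w = ((‖A e‖ ^ 2 * w.re : ℝ) : ℂ) + ((s * w.im : ℝ) : ℂ) * Complex.I := by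
    intro w
    have hsplit : w = ((w.re : ℝ) : ℂ) + ((w.im : ℝ) : ℂ) * Complex.I := (Complex.re_add_im w).symm
    calc Φ w = Φ ((w.re : ℂ)) + Φ (((w.im : ℝ) : ℂ) * Complex.I) := by
          conv_lhs => rw [hsplit]
          rw [map_add]
      _ = _ := by rw [hreal, him]
  rw [ha, hw]


theorem plane_formula (A : H → K) (hadd : ∀ x y, A (x + y) = A x + A y)
    (hop : ∀ x y : H, ⟪x, y⟫ = 0 → ⟪A x, A y⟫ = 0)
    {e f : H} (hef : ⟪e, f⟫ = 0) (hnorm : ‖e‖ = ‖f‖) (ζ μ ζ' μ' : ℂ) :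
    ⟪A (ζ • e + μ • f), A (ζ' • e + μ' • f)⟫ =
      ((‖A e‖ ^ 2 * (ζ' * (starRingEnd ℂ) ζ + μ' * (starRingEnd ℂ) μ).re : ℝ) : ℂ)
        + ((⟪A e, A (Complex.I • e)⟫.im
            * (ζ' * (starRingEnd ℂ) ζ + μ' * (starRingEnd ℂ) μ).im : ℝ) : ℂ) * Complex.I := by
  have hfe : ⟪f, e⟫ = 0 := inner_eq_zero_symm.mp hef
  have cross1 : ⟪A (ζ • e), A (μ' • f)⟫ = 0 := by
    apply hop; rw [inner_smul_left, inner_smul_right, hef]; ring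
  have cross2 : ⟪A (μ • f), A (ζ' • e)⟫ = 0 := by
    apply hop; rw [inner_smul_left, inner_smul_right, hfe]; ring
  have hswap : ∀ ν : ℂ, ⟪A f, A (ν • f)⟫ = ⟪A e, A (ν • e)⟫ := by
    intro ν
    have h := keyid A hadd hop hef hnorm 1 1 ν
    simp only [map_one, mul_one, one_smul] at h
    exact h.symm
  have hnAf : ‖A f‖ ^ 2 = ‖A e‖ ^ 2 := by
    have h := hswap 1
    simp only [one_smul] at h
    rw [inner_self_complex, inner_self_complex] at h
    exact_mod_cast h
  have hsf : (⟪A f, A (Complex.I • f)⟫).im = (⟪A e, A (Complex.I • e)⟫).im :=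
    congrArg Complex.im (hswap Complex.I)
  have main1 := phi_formula A hadd hop hef hnorm ζ ζ'
  have main2 := phi_formula A hadd hop hfe hnorm.symm μ μ'
  rw [hnAf, hsf] at main2
  rw [hadd, hadd, inner_add_left, inner_add_right, inner_add_right, cross1, cross2,
    main1, main2]
  simp only [Complex.add_re, Complex.add_im]
  push_cast
  ring

theorem plane_const (A : H → K) (hadd : ∀ x y, A (x + y) = A x + A y)
    (hop : ∀ x y : H, ⟪x, y⟫ = 0 → ⟪A x, A y⟫ = 0)
    {e f : H} (hef : ⟪e, f⟫ = 0) (hnorm : ‖e‖ = ‖f‖) (ζ μ : ℂ) :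
    ∃ n : ℝ, 0 ≤ n ∧ ‖ζ • e + μ • f‖ ^ 2 = n * ‖e‖ ^ 2
      ∧ ‖A (ζ • e + μ • f)‖ ^ 2 = ‖A e‖ ^ 2 * n
      ∧ (⟪A (ζ • e + μ • f), A (Complex.I • (ζ • e + μ • f))⟫).im
          = (⟪A e, A (Complex.I • e)⟫).im * n := by
  have hfe : ⟪f, e⟫ = 0 := inner_eq_zero_symm.mp hef
  have hX : (ζ * (starRingEnd ℂ) ζ + μ * (starRingEnd ℂ) μ)
      = ((‖ζ‖ ^ 2 + ‖μ‖ ^ 2 : ℝ) : ℂ) := by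
    rw [Complex.mul_conj, Complex.mul_conj]
    push_cast [Complex.normSq_eq_norm_sq]
    ring
  refine ⟨‖ζ‖ ^ 2 + ‖μ‖ ^ 2, by positivity, ?_, ?_, ?_⟩
  · have horth : ⟪ζ • e, μ • f⟫ = (0 : ℂ) := by
      rw [inner_smul_left, inner_smul_right, hef]; ring
    have h1 := @norm_add_sq ℂ _ _ _ _ (ζ • e) (μ • f)
    rw [horth] at h1
    simp only [map_zero, mul_zero, add_zero] at h1
    rw [h1, norm_smul, norm_smul, ← hnorm]
    ring
  · have h := plane_formula A hadd hop hef hnorm ζ μ ζ μ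
    rw [inner_self_complex, hX] at h
    simp only [Complex.ofReal_re, Complex.ofReal_im, mul_zero, Complex.ofReal_zero,
      zero_mul, add_zero] at h
    exact_mod_cast h
  · have hIu : Complex.I • (ζ • e + μ • f) = (Complex.I * ζ) • e + (Complex.I * μ) • f := by
      rw [smul_add, smul_smul, smul_smul]
    rw [hIu]
    have h := plane_formula A hadd hop hef hnorm ζ μ (Complex.I * ζ) (Complex.I * μ)
    have hX2 : (Complex.I * ζ * (starRingEnd ℂ) ζ + Complex.I * μ * (starRingEnd ℂ) μ)
        = Complex.I * ((‖ζ‖ ^ 2 + ‖μ‖ ^ 2 : ℝ) : ℂ) := by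
      rw [← hX]; ring
    rw [hX2] at h
    rw [h]
    simp [Complex.mul_re, Complex.mul_im, ← Complex.ofReal_pow]


theorem global_const (hdim : 2 ≤ Module.rank ℂ H) (A : H → K)
    (hadd : ∀ x y, A (x + y) = A x + A y)
    (hop : ∀ x y : H, ⟪x, y⟫ = 0 → ⟪A x, A y⟫ = 0)
    (x x' : H) (hx : x ≠ 0) :
    ‖A x‖ ^ 2 * ‖x'‖ ^ 2 = ‖A x'‖ ^ 2 * ‖x‖ ^ 2 ∧
      (⟪A x, A (Complex.I • x)⟫).im * ‖x'‖ ^ 2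
        = (⟪A x', A (Complex.I • x')⟫).im * ‖x‖ ^ 2 := by
  obtain ⟨f, c, d, hip, hnm, hf0, hdec⟩ := decomp hdim x x' hx
  obtain ⟨n, hn0, h1, h2, h3⟩ := plane_const A hadd hop hip hnm.symm c d
  rw [← hdec] at h1 h2 h3
  exact ⟨by rw [h1, h2]; ring, by rw [h1, h3]; ring⟩

theorem main_formula (hdim : 2 ≤ Module.rank ℂ H) (A : H → K)
    (hadd : ∀ x y, A (x + y) = A x + A y)
    (hop : ∀ x y : H, ⟪x, y⟫ = 0 → ⟪A x, A y⟫ = 0)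
    (e₀ : H) (he₀ : e₀ ≠ 0) (u v : H) :
    ⟪A u, A v⟫ = ((‖A e₀‖ ^ 2 / ‖e₀‖ ^ 2 * (⟪u, v⟫).re : ℝ) : ℂ)
      + (((⟪A e₀, A (Complex.I • e₀)⟫).im / ‖e₀‖ ^ 2 * (⟪u, v⟫).im : ℝ) : ℂ) * Complex.I := by
  have hA0 : A 0 = 0 := by
    have h := hadd 0 0
    simp only [add_zero] at h
    exact (left_eq_add.mp h)
  by_cases hu : u = 0
  · simp [hu, hA0]
  by_cases hv : v = 0
  · simp [hv, hA0]
  obtain ⟨f, c, d, hip, hnm, hf0, hdec⟩ := decomp hdim u v hu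
  have h := plane_formula A hadd hop hip hnm.symm 1 0 c d
  have hu1 : (1 : ℂ) • u + (0 : ℂ) • f = u := by simp
  have hXc : c * (starRingEnd ℂ) 1 + d * (starRingEnd ℂ) 0 = c := by simp
  rw [hu1, ← hdec, hXc] at h
  have hiv : ⟪u, v⟫ = c * ((‖u‖ ^ 2 : ℝ) : ℂ) := by
    rw [hdec, inner_add_right, inner_smul_right, inner_smul_right, hip, inner_self_complex]
    ring
  have hre : (⟪u, v⟫).re = c.re * ‖u‖ ^ 2 := by rw [hiv]; simp [Complex.mul_re, ← Complex.ofReal_pow]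
  have him : (⟪u, v⟫).im = c.im * ‖u‖ ^ 2 := by rw [hiv]; simp [Complex.mul_im, ← Complex.ofReal_pow]
  obtain ⟨hg1, hg2⟩ := global_const hdim A hadd hop u e₀ hu
  have hne : (‖e₀‖ ^ 2 : ℝ) ≠ 0 := pow_ne_zero _ (norm_ne_zero_iff.mpr he₀)
  have hnu : ‖A u‖ ^ 2 = ‖A e₀‖ ^ 2 / ‖e₀‖ ^ 2 * ‖u‖ ^ 2 := by
    field_simp
    linarith [hg1]
  have hsu : (⟪A u, A (Complex.I • u)⟫).im
      = (⟪A e₀, A (Complex.I • e₀)⟫).im / ‖e₀‖ ^ 2 * ‖u‖ ^ 2 := by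
    field_simp
    linarith [hg2]
  rw [h, hnu, hsu, hre, him]
  push_cast
  ring


end CharacterizationAux

open CharacterizationAux in
/-- Characterization of complex-linearity/conjugate-linearity for a non-zero
additive orthogonality preserving map `A` between complex inner product spaces
(`dim H ≥ 2`): (a) `A` complex-linear or conjugate-linear ↔ (b) `A(iz) ∈ {±i A z}`
for all `z` ↔ (c) for some non-zero `z` ↔ (d) `i A(z) ∈ A(H)` for some non-zero `z`. -/
theorem characterization_complexLinear_additive_op
    {H K : Type*} [NormedAddCommGroup H] [InnerProductSpace ℂ H]
    [NormedAddCommGroup K] [InnerProductSpace ℂ K]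
    (hdim : 2 ≤ Module.rank ℂ H)
    (A : H → K) (hA : A ≠ 0)
    (hadd : ∀ x y, A (x + y) = A x + A y)
    (hop : ∀ x y : H, ⟪x, y⟫ = 0 → ⟪A x, A y⟫ = 0) :
    (((∀ (l : ℂ) (x : H), A (l • x) = l • A x) ∨
        (∀ (l : ℂ) (x : H), A (l • x) = (starRingEnd ℂ l) • A x)) ↔
      (∀ z : H,
        A (Complex.I • z) = Complex.I • A z ∨ A (Complex.I • z) = -(Complex.I • A z))) ∧
    ((∀ z : H,
        A (Complex.I • z) = Complex.I • A z ∨ A (Complex.I • z) = -(Complex.I • A z)) ↔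
      (∃ z : H, z ≠ 0 ∧
        (A (Complex.I • z) = Complex.I • A z ∨ A (Complex.I • z) = -(Complex.I • A z)))) ∧
    ((∃ z : H, z ≠ 0 ∧
        (A (Complex.I • z) = Complex.I • A z ∨ A (Complex.I • z) = -(Complex.I • A z))) ↔
      (∃ z : H, z ≠ 0 ∧ Complex.I • A z ∈ Set.range A)) := by
  have hA0 : A 0 = 0 := by
    have h := hadd 0 0
    simp only [add_zero] at h
    exact (left_eq_add.mp h)
  have hAneg : ∀ x, A (-x) = -A x := by
    intro x
    have h := hadd x (-x)
    simp only [add_neg_cancel, hA0] at h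
    exact eq_neg_of_add_eq_zero_right h.symm
  have hnt : Nontrivial H := rank_pos_iff_nontrivial.mp (lt_of_lt_of_le (by norm_num) hdim)
  obtain ⟨e₀, he₀⟩ := exists_ne (0 : H)
  set γ : ℝ := ‖A e₀‖ ^ 2 / ‖e₀‖ ^ 2 with hγdef
  set s : ℝ := (⟪A e₀, A (Complex.I • e₀)⟫).im / ‖e₀‖ ^ 2 with hsdef
  have hmain : ∀ u v : H, ⟪A u, A v⟫
      = ((γ * (⟪u, v⟫).re : ℝ) : ℂ) + ((s * (⟪u, v⟫).im : ℝ) : ℂ) * Complex.I :=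
    fun u v => main_formula hdim A hadd hop e₀ he₀ u v
  -- norms
  have hnorm : ∀ u : H, ‖A u‖ ^ 2 = γ * ‖u‖ ^ 2 := by
    intro u
    have h := hmain u u
    rw [inner_self_complex, inner_self_complex] at h
    simp only [Complex.ofReal_re, Complex.ofReal_im, mul_zero, Complex.ofReal_zero,
      zero_mul, add_zero] at h
    exact_mod_cast h
  -- difference formulas
  have hd1 : ∀ (l : ℂ) (x : H),
      ‖A (l • x) - l • A x‖ ^ 2 = 2 * (γ - s) * l.im ^ 2 * ‖x‖ ^ 2 := by
    intro l x
    have hns := @norm_sub_sq ℂ K _ _ _ (A (l • x)) (l • A x)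
    have hm := hmain (l • x) x
    have hlx : ⟪l • x, x⟫ = (starRingEnd ℂ) l * ((‖x‖ ^ 2 : ℝ) : ℂ) := by
      rw [inner_smul_left, inner_self_complex]
    have hre : (⟪l • x, x⟫).re = l.re * ‖x‖ ^ 2 := by
      rw [hlx]; simp [Complex.mul_re, ← Complex.ofReal_pow]
    have him : (⟪l • x, x⟫).im = -(l.im * ‖x‖ ^ 2) := by
      rw [hlx]; simp [Complex.mul_im, ← Complex.ofReal_pow]
    rw [hre, him] at hm
    have hRe : RCLike.re ⟪A (l • x), l • A x⟫
        = γ * (l.re ^ 2 * ‖x‖ ^ 2) + s * (l.im ^ 2 * ‖x‖ ^ 2) := by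
      rw [inner_smul_right, hm]
      simp [Complex.mul_re, Complex.mul_im, ← Complex.ofReal_pow]
      ring
    have hn1 : ‖A (l • x)‖ ^ 2 = γ * ((l.re ^ 2 + l.im ^ 2) * ‖x‖ ^ 2) := by
      rw [hnorm (l • x), norm_smul, mul_pow]
      rw [Complex.sq_norm, Complex.normSq_apply]
      ring
    have hn2 : ‖l • A x‖ ^ 2 = (l.re ^ 2 + l.im ^ 2) * (γ * ‖x‖ ^ 2) := by
      rw [norm_smul, mul_pow, hnorm]
      rw [Complex.sq_norm, Complex.normSq_apply]
      ring
    rw [hns, hRe, hn1, hn2]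
    ring
  have hd2 : ∀ (l : ℂ) (x : H),
      ‖A (l • x) - (starRingEnd ℂ l) • A x‖ ^ 2 = 2 * (γ + s) * l.im ^ 2 * ‖x‖ ^ 2 := by
    intro l x
    have hns := @norm_sub_sq ℂ K _ _ _ (A (l • x)) ((starRingEnd ℂ l) • A x)
    have hm := hmain (l • x) x
    have hlx : ⟪l • x, x⟫ = (starRingEnd ℂ) l * ((‖x‖ ^ 2 : ℝ) : ℂ) := by
      rw [inner_smul_left, inner_self_complex]
    have hre : (⟪l • x, x⟫).re = l.re * ‖x‖ ^ 2 := by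
      rw [hlx]; simp [Complex.mul_re, ← Complex.ofReal_pow]
    have him : (⟪l • x, x⟫).im = -(l.im * ‖x‖ ^ 2) := by
      rw [hlx]; simp [Complex.mul_im, ← Complex.ofReal_pow]
    rw [hre, him] at hm
    have hRe : RCLike.re ⟪A (l • x), (starRingEnd ℂ l) • A x⟫
        = γ * (l.re ^ 2 * ‖x‖ ^ 2) - s * (l.im ^ 2 * ‖x‖ ^ 2) := by
      rw [inner_smul_right, hm]
      simp [Complex.mul_re, Complex.mul_im, ← Complex.ofReal_pow]
      ring
    have hn1 : ‖A (l • x)‖ ^ 2 = γ * ((l.re ^ 2 + l.im ^ 2) * ‖x‖ ^ 2) := by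
      rw [hnorm (l • x), norm_smul, mul_pow]
      rw [Complex.sq_norm, Complex.normSq_apply]
      ring
    have hn2 : ‖(starRingEnd ℂ l) • A x‖ ^ 2 = (l.re ^ 2 + l.im ^ 2) * (γ * ‖x‖ ^ 2) := by
      have hcn : ‖(starRingEnd ℂ) l‖ = ‖l‖ := by
        exact Complex.norm_conj l
      rw [norm_smul, mul_pow, hnorm, hcn, Complex.sq_norm,
        Complex.normSq_apply]
      ring
    rw [hns, hRe, hn1, hn2]
    ring
  -- s = γ gives linearity; s = -γ gives conjugate linearity
  have hlin : s = γ → ∀ (l : ℂ) (x : H), A (l • x) = l • A x := by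
    intro hs l x
    have h0 : ‖A (l • x) - l • A x‖ ^ 2 = 0 := by rw [hd1 l x, hs]; ring
    have h1 : ‖A (l • x) - l • A x‖ = 0 :=
      (pow_eq_zero_iff (by norm_num : (2 : ℕ) ≠ 0)).mp h0
    rw [norm_eq_zero, sub_eq_zero] at h1
    exact h1
  have hconj : s = -γ → ∀ (l : ℂ) (x : H), A (l • x) = (starRingEnd ℂ l) • A x := by
    intro hs l x
    have h0 : ‖A (l • x) - (starRingEnd ℂ l) • A x‖ ^ 2 = 0 := by rw [hd2 l x, hs]; ring
    have h1 : ‖A (l • x) - (starRingEnd ℂ l) • A x‖ = 0 :=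
      (pow_eq_zero_iff (by norm_num : (2 : ℕ) ≠ 0)).mp h0
    rw [norm_eq_zero, sub_eq_zero] at h1
    exact h1
  -- s = ±γ gives condition (b)
  have hbofs : (s = γ ∨ s = -γ) →
      ∀ z : H, A (Complex.I • z) = Complex.I • A z
        ∨ A (Complex.I • z) = -(Complex.I • A z) := by
    rintro (hs | hs) z
    · exact Or.inl (hlin hs Complex.I z)
    · right
      rw [hconj hs Complex.I z, Complex.conj_I, neg_smul]
  -- an instance of (c) gives s = ±γ
  have hinst : ∀ z : H, z ≠ 0 →
      (A (Complex.I • z) = Complex.I • A z ∨ A (Complex.I • z) = -(Complex.I • A z)) →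
      s = γ ∨ s = -γ := by
    intro z hz hor
    have hz2 : (0 : ℝ) < ‖z‖ ^ 2 := by
      have := norm_pos_iff.mpr hz
      positivity
    rcases hor with h | h
    · left
      have hd0 : (0 : ℝ) = 2 * (γ - s) * Complex.I.im ^ 2 * ‖z‖ ^ 2 := by
        rw [← hd1 Complex.I z, h, sub_self, norm_zero]
        ring
      simp only [Complex.I_im, one_pow, mul_one] at hd0
      nlinarith [hd0]
    · right
      have hd0 : (0 : ℝ) = 2 * (γ + s) * Complex.I.im ^ 2 * ‖z‖ ^ 2 := by
        rw [← hd2 Complex.I z, Complex.conj_I, neg_smul, h, sub_self, norm_zero]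
        ring
      simp only [Complex.I_im, one_pow, mul_one] at hd0
      nlinarith [hd0]
  -- condition (d) gives s = ±γ
  have hdimp : ∀ z : H, z ≠ 0 → Complex.I • A z ∈ Set.range A → s = γ ∨ s = -γ := by
    rintro z hz ⟨w, hw⟩
    have key : ∀ v : H, γ * (⟪w, v⟫).re = s * (⟪z, v⟫).im
        ∧ s * (⟪w, v⟫).im = -(γ * (⟪z, v⟫).re) := by
      intro v
      have h1 := hmain w v
      rw [hw] at h1
      have h2 : ⟪Complex.I • A z, A v⟫ = -Complex.I * ⟪A z, A v⟫ := by
        rw [inner_smul_left, Complex.conj_I]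
      rw [h2, hmain z v] at h1
      have hre := congrArg Complex.re h1
      have him := congrArg Complex.im h1
      simp [Complex.mul_re, Complex.mul_im, Complex.add_re, Complex.add_im] at hre him
      constructor
      · linarith [hre]
      · linarith [him]
    have keyI : ∀ v : H, -(γ * (⟪w, v⟫).im) = s * (⟪z, v⟫).re := by
      intro v
      have h := (key (Complex.I • v)).1
      have h1 : ⟪w, Complex.I • v⟫ = Complex.I * ⟪w, v⟫ := inner_smul_right _ _ _
      have h2 : ⟪z, Complex.I • v⟫ = Complex.I * ⟪z, v⟫ := inner_smul_right _ _ _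
      rw [h1, h2] at h
      simp [Complex.mul_re, Complex.mul_im, ← Complex.ofReal_pow] at h
      linarith [h]
    have hsq : s ^ 2 = γ ^ 2 := by
      have ha := keyI z
      have hb := (key z).2
      have hz2 : (⟪z, z⟫).re = ‖z‖ ^ 2 := by
        rw [inner_self_complex]; simp [← Complex.ofReal_pow]
      have hz3 : (0 : ℝ) < ‖z‖ ^ 2 := by
        have := norm_pos_iff.mpr hz
        positivity
      -- -γ Im⟪w,z⟫ = s Re⟪z,z⟫ ; s Im⟪w,z⟫ = -γ Re⟪z,z⟫
      rw [hz2] at ha hb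
      have hkey : (s ^ 2 - γ ^ 2) * ‖z‖ ^ 2 = 0 := by
        linear_combination (-s) * ha + (-γ) * hb
      rcases mul_eq_zero.mp hkey with h | h
      · linarith
      · exact absurd h (ne_of_gt hz3)
    have : (s - γ) * (s + γ) = 0 := by linear_combination hsq
    rcases mul_eq_zero.mp this with h | h
    · exact Or.inl (by linarith)
    · exact Or.inr (by linarith)
  -- assemble the three equivalences
  obtain ⟨z₀, hz₀⟩ := exists_ne (0 : H)
  refine ⟨⟨?_, ?_⟩, ⟨?_, ?_⟩, ⟨?_, ?_⟩⟩
  · rintro (hl | hc) z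
    · exact Or.inl (hl Complex.I z)
    · right
      rw [hc Complex.I z, Complex.conj_I, neg_smul]
  · intro hb
    rcases hinst z₀ hz₀ (hb z₀) with hs | hs
    · exact Or.inl (hlin hs)
    · exact Or.inr (hconj hs)
  · intro hb
    exact ⟨z₀, hz₀, hb z₀⟩
  · rintro ⟨z, hz, hor⟩
    exact hbofs (hinst z hz hor)
  · rintro ⟨z, hz, hor⟩
    refine ⟨z, hz, ?_⟩
    rcases hor with h | h
    · exact ⟨Complex.I • z, h⟩
    · refine ⟨-(Complex.I • z), ?_⟩
      rw [hAneg, h, neg_neg]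
  · rintro ⟨z, hz, hmem⟩
    exact ⟨z, hz, hbofs (hdimp z hz hmem) z⟩
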